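/- Let I ⊆ S = K[x_1,…,x_t] be an 𝔪-primary monomial ideal with v(I) = α(I) − 1. Then v(I^{n+1}) = v(I) + n·α(I) for all n ≥ 1. -/

import Mathlib

open MvPolynomial

noncomputable section

/-- The `v`-number of a graded ideal `I ⊆ K[x_1,…,x_t]`: the least `k ≥ 0` such that there is a
homogeneous polynomial `f` of degree `k` with `(I : f)` an associated prime of `S/I`. -/
def vNumber {σ K : Type*} [Field K] (I : Ideal (MvPolynomial σ K)) : ℕ :=
  sInf {k : ℕ | ∃ f : MvPolynomial σ K, f.IsHomogeneous k ∧
    Submodule.colon I (Ideal.span {f}) ∈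
      associatedPrimes (MvPolynomial σ K) (MvPolynomial σ K ⧸ I)}

/-- The edge ideal of a simple graph: generated by `x_i * x_j` for edges `{x_i, x_j}`. -/
def edgeIdeal (K : Type*) [Field K] {V : Type*} (G : SimpleGraph V) :
    Ideal (MvPolynomial V K) :=
  Ideal.span {m | ∃ i j, G.Adj i j ∧ m = X i * X j}

/-- `I` is a monomial ideal: generated by a set of monomials. -/
def IsMonomialIdeal {σ K : Type*} [Field K] (I : Ideal (MvPolynomial σ K)) : Prop :=
  ∃ A : Set (σ →₀ ℕ), I = Ideal.span ((fun a => (monomial a (1 : K))) '' A)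

/-- The graded maximal ideal `𝔪 = ⟨x_1,…,x_t⟩`. -/
def maxIdeal (K : Type*) [Field K] (σ : Type*) : Ideal (MvPolynomial σ K) :=
  Ideal.span (Set.range (X : σ → MvPolynomial σ K))

/-- `α(I)`: the minimum degree of a nonzero element of `I`. -/
def alphaNumber {σ K : Type*} [Field K] (I : Ideal (MvPolynomial σ K)) : ℕ :=
  sInf {d : ℕ | ∃ f ∈ I, f ≠ 0 ∧ f.totalDegree = d}

/-- Exponent vectors of the minimal monomial generators of a monomial ideal `I`:
monomials in `I` none of whose proper divisors lies in `I`. -/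
def minimalGenerators {σ K : Type*} [Field K] (I : Ideal (MvPolynomial σ K)) :
    Set (σ →₀ ℕ) :=
  {a | (monomial a (1 : K)) ∈ I ∧
    ∀ b : σ →₀ ℕ, b ≤ a → b ≠ a → (monomial b (1 : K)) ∉ I}

namespace VAux

variable {K : Type*} [Field K] {σ : Type*}

lemma maxIdeal_eq_ker :
    maxIdeal K σ = RingHom.ker (constantCoeff : MvPolynomial σ K →+* K) := by
  ext p
  rw [maxIdeal, ← Set.image_univ, mem_ideal_span_X_image, RingHom.mem_ker]
  rw [show (constantCoeff p : K) = coeff 0 p from rfl]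
  constructor
  · intro h
    by_contra hc
    obtain ⟨i, -, hi⟩ := h 0 (mem_support_iff.mpr hc)
    simp at hi
  · intro h m hm
    by_contra hc
    push_neg at hc
    have hm0 : m = 0 := by
      ext i
      simpa using hc i (Set.mem_univ i)
    rw [hm0] at hm
    exact (mem_support_iff.mp hm) h

lemma maxIdeal_isMaximal : (maxIdeal K σ).IsMaximal := by
  rw [maxIdeal_eq_ker]
  exact RingHom.ker_isMaximal_of_surjective _ fun k => ⟨C k, constantCoeff_C _ _⟩

lemma colon_eq_annihilator (J : Ideal (MvPolynomial σ K)) (f : MvPolynomial σ K) :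
    Submodule.colon J (Ideal.span {f}) =
      (Submodule.span (MvPolynomial σ K)
        {(Ideal.Quotient.mk J f : MvPolynomial σ K ⧸ J)}).annihilator := by
  ext r
  rw [Submodule.mem_annihilator_span_singleton, Ideal.mem_colon_span_singleton]
  rw [show r • (Ideal.Quotient.mk J f) = Ideal.Quotient.mk J (r * f) from rfl,
    Ideal.Quotient.eq_zero_iff_mem]

lemma colon_mem_associatedPrimes {J : Ideal (MvPolynomial σ K)} {f : MvPolynomial σ K}
    (h : (Submodule.colon J (Ideal.span {f})).IsPrime) :
    Submodule.colon J (Ideal.span {f}) ∈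
      associatedPrimes (MvPolynomial σ K) (MvPolynomial σ K ⧸ J) :=
  ⟨h, ⟨Ideal.Quotient.mk J f, by
    have e : Submodule.colon (⊥ : Submodule (MvPolynomial σ K) (MvPolynomial σ K ⧸ J))
        {Ideal.Quotient.mk J f} = Submodule.colon J (Ideal.span {f}) := by
      ext r
      rw [colon_eq_annihilator J f, Submodule.mem_annihilator_span_singleton,
        Submodule.mem_colon_singleton, Submodule.mem_bot]
    rw [e, h.radical]⟩⟩

lemma le_of_mem_associatedPrimes {J P : Ideal (MvPolynomial σ K)}
    (h : P ∈ associatedPrimes (MvPolynomial σ K) (MvPolynomial σ K ⧸ J)) : J ≤ P := by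
  obtain ⟨hp, x, rfl⟩ := h
  obtain ⟨y, rfl⟩ := Ideal.Quotient.mk_surjective x
  intro r hr
  apply Ideal.le_radical
  rw [Submodule.mem_colon_singleton, Submodule.mem_bot]
  show Ideal.Quotient.mk J (r * y) = 0
  rw [Ideal.Quotient.eq_zero_iff_mem]
  exact J.mul_mem_right y hr

lemma isPrime_of_mem_associatedPrimes {J P : Ideal (MvPolynomial σ K)}
    (h : P ∈ associatedPrimes (MvPolynomial σ K) (MvPolynomial σ K ⧸ J)) : P.IsPrime := h.1

variable [Fintype σ]

lemma degree_eq_sum (a : σ →₀ ℕ) : a.degree = ∑ i, a i :=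
  Finset.sum_subset (Finset.subset_univ _) (fun _ _ hi => Finsupp.notMem_support_iff.mp hi)

lemma degree_add (a b : σ →₀ ℕ) : (a + b).degree = a.degree + b.degree := by
  simp [degree_eq_sum, Finset.sum_add_distrib]

lemma degree_mono {a b : σ →₀ ℕ} (h : a ≤ b) : a.degree ≤ b.degree := by
  rw [degree_eq_sum, degree_eq_sum]
  exact Finset.sum_le_sum fun i _ => h i

lemma sum_eq_degree (a : σ →₀ ℕ) : (a.sum fun _ e => e) = a.degree := rfl

lemma alpha_le {I : Ideal (MvPolynomial σ K)} {f : MvPolynomial σ K}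
    (hf : f ∈ I) (h0 : f ≠ 0) : alphaNumber I ≤ f.totalDegree :=
  Nat.sInf_le ⟨f, hf, h0, rfl⟩

/-- Every exponent in the support of an element of `I ^ m` has degree at least `m * α`. -/
lemma pow_support_degree {I : Ideal (MvPolynomial σ K)} {A : Set (σ →₀ ℕ)}
    (hI : I = Ideal.span ((fun a => (monomial a (1 : K))) '' A)) (α : ℕ)
    (hα : ∀ a ∈ A, α ≤ a.degree) :
    ∀ m : ℕ, ∀ f ∈ I ^ m, ∀ xs ∈ f.support, m * α ≤ xs.degree := by
  classical
  intro m
  induction m with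
  | zero => intro f _ xs _; simp
  | succ m ih =>
    intro f hf
    rw [pow_succ] at hf
    refine Submodule.mul_induction_on hf ?_ ?_
    · intro a ha b hb xs hxs
      have hsub := support_mul a b hxs
      rw [Finset.mem_add] at hsub
      obtain ⟨u, hu, v, hv, rfl⟩ := hsub
      have h1 : m * α ≤ u.degree := ih a ha u hu
      have h2 : α ≤ v.degree := by
        rw [hI] at hb
        obtain ⟨s, hs, hsv⟩ := mem_ideal_span_monomial_image.mp hb v hv
        exact le_trans (hα s hs) (degree_mono hsv)
      rw [degree_add]
      calc (m + 1) * α = m * α + α := by ring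
      _ ≤ u.degree + v.degree := add_le_add h1 h2
    · intro x y hx hy xs hxs
      rcases Finset.mem_union.mp (support_add hxs) with h | h
      · exact hx xs h
      · exact hy xs h

lemma pow_totalDegree {I : Ideal (MvPolynomial σ K)} {A : Set (σ →₀ ℕ)}
    (hI : I = Ideal.span ((fun a => (monomial a (1 : K))) '' A)) (α : ℕ)
    (hα : ∀ a ∈ A, α ≤ a.degree) (m : ℕ) {f : MvPolynomial σ K}
    (hf : f ∈ I ^ m) (h0 : f ≠ 0) : m * α ≤ f.totalDegree := by
  obtain ⟨xs, hxs⟩ := support_nonempty.mpr h0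
  refine le_trans (pow_support_degree hI α hα m f hf xs hxs) ?_
  rw [← sum_eq_degree]
  exact le_totalDegree hxs

end VAux

open VAux

/-- if I is 𝔪-primary monomial with v(I) = α(I) - 1, then
v(I^{n+1}) = v(I) + n·α(I) for all n ≥ 1. -/
theorem vNumber_pow_of_vNumber_eq_alpha_sub_one {K : Type*} [Field K] (t : ℕ)
    (I : Ideal (MvPolynomial (Fin t) K))
    (hmon : IsMonomialIdeal I) (hprim : I.radical = maxIdeal K (Fin t))
    (hv : vNumber I = alphaNumber I - 1) :
    ∀ n, 1 ≤ n → vNumber (I ^ (n + 1)) = vNumber I + n * alphaNumber I := by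
  classical
  obtain ⟨A, hI⟩ := hmon
  intro n hn
  rcases Nat.eq_zero_or_pos t with ht | ht
  · -- degenerate case t = 0 : then I = ⊥
    subst ht
    have hm : maxIdeal K (Fin 0) = ⊥ := by
      rw [maxIdeal, Set.range_eq_empty, Ideal.span_empty]
    have hIbot : I = ⊥ := by
      have h1 : I ≤ I.radical := Ideal.le_radical
      rw [hprim, hm] at h1
      exact le_bot_iff.mp h1
    have halpha : alphaNumber I = 0 := by
      rw [hIbot]
      have : {d : ℕ | ∃ f ∈ (⊥ : Ideal (MvPolynomial (Fin 0) K)), f ≠ 0 ∧ f.totalDegree = d}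
          = ∅ := by
        ext d
        simp only [Set.mem_setOf_eq, Set.mem_empty_iff_false, iff_false, not_exists]
        rintro f ⟨hf, h0, -⟩
        exact h0 (Ideal.mem_bot.mp hf)
      rw [alphaNumber, this, Nat.sInf_empty]
    have hpow : I ^ (n + 1) = I := by
      rw [hIbot]
      rw [← Ideal.zero_eq_bot, zero_pow (Nat.succ_ne_zero n)]
    rw [hpow, halpha, mul_zero, add_zero]
  -- main case t ≥ 1
  have hmm : (maxIdeal K (Fin t)).IsMaximal := maxIdeal_isMaximal
  have hIle : I ≤ maxIdeal K (Fin t) := hprim ▸ Ideal.le_radical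
  have hIne_top : I ≠ ⊤ := fun h => hmm.ne_top (top_le_iff.mp (h ▸ hIle))
  obtain ⟨i0⟩ : Nonempty (Fin t) := ⟨⟨0, ht⟩⟩
  have hXrad : ∀ i : Fin t, X i ∈ I.radical := fun i => by
    rw [hprim]; exact Ideal.subset_span ⟨i, rfl⟩
  choose c hc using fun i => Ideal.mem_radical_iff.mp (hXrad i)
  have hIne_bot : I ≠ ⊥ := by
    intro h
    have hx := hc i0
    rw [h, Ideal.mem_bot] at hx
    exact pow_ne_zero _ (X_ne_zero i0) hx
  set α := alphaNumber I with hα_def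
  set v := vNumber I with hv_def
  -- α is attained
  have hαmem : ∃ f ∈ I, f ≠ 0 ∧ f.totalDegree = α := by
    obtain ⟨f, hf, h0⟩ := (Submodule.ne_bot_iff I).mp hIne_bot
    have hne : {d : ℕ | ∃ f ∈ I, f ≠ 0 ∧ f.totalDegree = d}.Nonempty :=
      ⟨f.totalDegree, f, hf, h0, rfl⟩
    exact Nat.sInf_mem hne
  obtain ⟨h0poly, hh0I, hh0ne, hh0deg⟩ := hαmem
  -- a monomial of degree α inside I
  obtain ⟨xs, hxs⟩ := support_nonempty.mpr hh0ne
  have hgI : (monomial xs (1 : K)) ∈ I := by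
    rw [hI] at hh0I ⊢
    obtain ⟨s, hs, hsle⟩ := mem_ideal_span_monomial_image.mp hh0I xs hxs
    have hmul : monomial xs (1 : K) = monomial s 1 * monomial (xs - s) 1 := by
      rw [monomial_mul, one_mul, add_tsub_cancel_of_le hsle]
    rw [hmul]
    exact Ideal.mul_mem_right _ _ (Ideal.subset_span ⟨s, hs, rfl⟩)
  have hgne : (monomial xs (1 : K)) ≠ 0 := by
    rw [Ne, monomial_eq_zero]; exact one_ne_zero
  have hgdeg : xs.degree = α := by
    have h1 : α ≤ xs.degree := by
      have h1' := alpha_le hgI hgne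
      rwa [totalDegree_monomial _ (one_ne_zero (α := K)), sum_eq_degree] at h1'
    have h2 : xs.degree ≤ α := by
      rw [← hh0deg, ← sum_eq_degree]
      exact le_totalDegree hxs
    omega
  set g := monomial xs (1 : K) with hg_def
  -- all generators have degree ≥ α
  have hA : ∀ a ∈ A, α ≤ a.degree := by
    intro a ha
    have hmem : monomial a (1 : K) ∈ I := hI ▸ Ideal.subset_span ⟨a, ha, rfl⟩
    have h1 := alpha_le hmem (by rw [Ne, monomial_eq_zero]; exact one_ne_zero)
    rwa [totalDegree_monomial _ (one_ne_zero (α := K)), sum_eq_degree] at h1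
  -- α ≥ 1
  have hα1 : 1 ≤ α := by
    by_contra h
    have hα0 : α = 0 := by omega
    have hdeg0 : h0poly.totalDegree = 0 := by rw [hh0deg, hα0]
    have hm0 : ∀ m ∈ h0poly.support, ∀ x, m x = 0 :=
      (totalDegree_eq_zero_iff (Fin t) h0poly).mp hdeg0
    have hxs0 : xs = 0 := by
      ext i; exact hm0 xs hxs i
    have h1 : constantCoeff h0poly = 0 := by
      have := maxIdeal_eq_ker (K := K) (σ := Fin t) ▸ hIle hh0I
      exact this
    have h2 : (0 : Fin t →₀ ℕ) ∈ h0poly.support := hxs0 ▸ hxs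
    rw [mem_support_iff] at h2
    exact h2 h1
  have hαv : α = v + 1 := by
    omega
  -- v-number of I is attained: the v-set of I is nonempty
  have hvset_ne : {k : ℕ | ∃ f : MvPolynomial (Fin t) K, f.IsHomogeneous k ∧
      Submodule.colon I (Ideal.span {f}) ∈
        associatedPrimes (MvPolynomial (Fin t) K) (MvPolynomial (Fin t) K ⧸ I)}.Nonempty := by
    set B : Set (Fin t →₀ ℕ) := {a | monomial a (1 : K) ∉ I} with hB_def
    have hB0 : (0 : Fin t →₀ ℕ) ∈ B := by
      intro hmem
      apply hIne_top
      rw [Ideal.eq_top_iff_one]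
      simpa using hmem
    have hBsub : B ⊆ {a | a.degree ≤ ∑ i, c i} := by
      intro a ha
      have hbound : ∀ i, a i ≤ c i := by
        intro i
        by_contra hlt
        push_neg at hlt
        apply ha
        have hle : Finsupp.single i (c i) ≤ a := by
          rw [Finsupp.single_le_iff]; omega
        have hmul : monomial a (1 : K) =
            monomial (Finsupp.single i (c i)) 1 * monomial (a - Finsupp.single i (c i)) 1 := by
          rw [monomial_mul, one_mul, add_tsub_cancel_of_le hle]
        rw [hmul, ← X_pow_eq_monomial]
        exact Ideal.mul_mem_right _ _ (hc i)
      calc a.degree = ∑ i, a i := degree_eq_sum a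
      _ ≤ ∑ i, c i := Finset.sum_le_sum fun i _ => hbound i
    have hBfin : B.Finite := (Finsupp.finite_of_degree_le _).subset hBsub
    obtain ⟨a, haB, hamax⟩ := Set.Finite.exists_maximalFor Finsupp.degree B hBfin ⟨0, hB0⟩
    have hcol : Submodule.colon I (Ideal.span {monomial a (1 : K)}) = maxIdeal K (Fin t) := by
      refine (hmm.eq_of_le ?_ ?_).symm
      · intro h
        have h1 : (1 : MvPolynomial (Fin t) K) ∈
            Submodule.colon I (Ideal.span {monomial a (1 : K)}) := h.symm ▸ Submodule.mem_top
        rw [Ideal.mem_colon_span_singleton, one_mul] at h1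
        exact haB h1
      · rw [maxIdeal, Ideal.span_le]
        rintro _ ⟨i, rfl⟩
        rw [SetLike.mem_coe, Ideal.mem_colon_span_singleton]
        by_contra hnot
        have hmem : (a + Finsupp.single i 1) ∈ B := by
          intro hmemI
          apply hnot
          have hXa : X i * monomial a (1 : K) = monomial (a + Finsupp.single i 1) 1 := by
            rw [show (X i : MvPolynomial (Fin t) K) = monomial (Finsupp.single i 1) 1 from rfl,
              monomial_mul, one_mul, add_comm]
          rw [hXa]
          exact hmemI
        have hdeg : Finsupp.degree (a + Finsupp.single i 1) = a.degree + 1 := by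
          rw [degree_add, degree_eq_sum (Finsupp.single i 1)]
          simp [Finsupp.single_apply]
        have := hamax hmem (by omega)
        omega
    exact ⟨a.degree, monomial a 1,
      isHomogeneous_monomial _ rfl,
      colon_mem_associatedPrimes (hcol ▸ hmm.isPrime)⟩
  have hvmem : ∃ f : MvPolynomial (Fin t) K, f.IsHomogeneous v ∧
      Submodule.colon I (Ideal.span {f}) ∈
        associatedPrimes (MvPolynomial (Fin t) K) (MvPolynomial (Fin t) K ⧸ I) :=
    Nat.sInf_mem hvset_ne
  obtain ⟨f, hfh, hfass⟩ := hvmem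
  have hfP : Submodule.colon I (Ideal.span {f}) = maxIdeal K (Fin t) := by
    have h1 : I ≤ Submodule.colon I (Ideal.span {f}) := le_of_mem_associatedPrimes hfass
    have h2 : maxIdeal K (Fin t) ≤ Submodule.colon I (Ideal.span {f}) := by
      rw [← hprim]
      exact (isPrime_of_mem_associatedPrimes hfass).radical_le_iff.mpr h1
    exact ((hmm.eq_of_le (isPrime_of_mem_associatedPrimes hfass).ne_top h2)).symm
  have hfne : f ≠ 0 := by
    intro h
    have h1 : (1 : MvPolynomial (Fin t) K) ∈ Submodule.colon I (Ideal.span {f}) := by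
      rw [Ideal.mem_colon_span_singleton, one_mul, h]
      exact I.zero_mem
    rw [hfP] at h1
    exact hmm.ne_top ((Ideal.eq_top_iff_one _).mpr h1)
  -- the witness for I^(n+1)
  set F := f * g ^ n with hF_def
  have hFhom : F.IsHomogeneous (v + n * α) := by
    have h2 : (g ^ n).IsHomogeneous (α * n) := (isHomogeneous_monomial _ hgdeg).pow n
    have := hfh.mul h2
    rwa [mul_comm α n] at this
  have hFne : F ≠ 0 := mul_ne_zero hfne (pow_ne_zero _ hgne)
  have hFdeg : F.totalDegree = v + n * α := hFhom.totalDegree hFne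
  have hFnotmem : F ∉ I ^ (n + 1) := by
    intro hmem
    have h1 : (n + 1) * α ≤ F.totalDegree := pow_totalDegree hI α hA (n + 1) hmem hFne
    rw [hFdeg] at h1
    have h2 : (n + 1) * α = n * α + α := by ring
    omega
  have hcolF : Submodule.colon (I ^ (n + 1)) (Ideal.span {F}) = maxIdeal K (Fin t) := by
    have hle : maxIdeal K (Fin t) ≤ Submodule.colon (I ^ (n + 1)) (Ideal.span {F}) := by
      rw [maxIdeal, Ideal.span_le]
      rintro _ ⟨i, rfl⟩
      rw [SetLike.mem_coe, Ideal.mem_colon_span_singleton]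
      have h1 : X i * f ∈ I := by
        have hXi : (X i : MvPolynomial (Fin t) K) ∈ Submodule.colon I (Ideal.span {f}) :=
          hfP ▸ Ideal.subset_span ⟨i, rfl⟩
        exact Ideal.mem_colon_span_singleton.mp hXi
      have h2 : g ^ n ∈ I ^ n := Ideal.pow_mem_pow hgI n
      have h3 : X i * F = (X i * f) * g ^ n := by rw [hF_def]; ring
      rw [h3, pow_succ']
      exact Ideal.mul_mem_mul h1 h2
    have hne : Submodule.colon (I ^ (n + 1)) (Ideal.span {F}) ≠ ⊤ := by
      intro h
      have h1 : (1 : MvPolynomial (Fin t) K) ∈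
          Submodule.colon (I ^ (n + 1)) (Ideal.span {F}) := h.symm ▸ Submodule.mem_top
      rw [Ideal.mem_colon_span_singleton, one_mul] at h1
      exact hFnotmem h1
    exact (hmm.eq_of_le hne hle).symm
  have hFass : Submodule.colon (I ^ (n + 1)) (Ideal.span {F}) ∈
      associatedPrimes (MvPolynomial (Fin t) K) (MvPolynomial (Fin t) K ⧸ I ^ (n + 1)) :=
    colon_mem_associatedPrimes (hcolF ▸ hmm.isPrime)
  -- conclude
  show sInf _ = v + n * α
  apply le_antisymm
  · exact Nat.sInf_le ⟨F, hFhom, hFass⟩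
  · apply le_csInf
    · exact ⟨v + n * α, F, hFhom, hFass⟩
    rintro k ⟨f', hf'h, hf'ass⟩
    have hprime := isPrime_of_mem_associatedPrimes hf'ass
    have hf'ne : f' ≠ 0 := by
      intro h
      have h1 : (1 : MvPolynomial (Fin t) K) ∈
          Submodule.colon (I ^ (n + 1)) (Ideal.span {f'}) := by
        rw [Ideal.mem_colon_span_singleton, one_mul, h]
        exact (I ^ (n + 1)).zero_mem
      rw [← Ideal.eq_top_iff_one] at h1
      exact hprime.ne_top h1
    have hcontain : maxIdeal K (Fin t) ≤ Submodule.colon (I ^ (n + 1)) (Ideal.span {f'}) := by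
      have h1 : I ^ (n + 1) ≤ Submodule.colon (I ^ (n + 1)) (Ideal.span {f'}) :=
        le_of_mem_associatedPrimes hf'ass
      have h2 : (I ^ (n + 1)).radical = maxIdeal K (Fin t) := by
        rw [Ideal.radical_pow I (show n + 1 ≠ 0 by omega), hprim]
      rw [← h2]
      exact hprime.radical_le_iff.mpr h1
    have hX0 : X i0 * f' ∈ I ^ (n + 1) :=
      Ideal.mem_colon_span_singleton.mp (hcontain (Ideal.subset_span ⟨i0, rfl⟩))
    have hXf'ne : X i0 * f' ≠ 0 := mul_ne_zero (X_ne_zero i0) hf'ne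
    have hhom : (X i0 * f').IsHomogeneous (1 + k) := (isHomogeneous_X K i0).mul hf'h
    have hdeg : (X i0 * f').totalDegree = 1 + k := hhom.totalDegree hXf'ne
    have hb : (n + 1) * α ≤ 1 + k := by
      rw [← hdeg]
      exact pow_totalDegree hI α hA (n + 1) hX0 hXf'ne
    have h2 : (n + 1) * α = n * α + α := by ring
    omega
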